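/- In the two-group factor-model setup, suppose α₁ = α₂ = α and p₁(n)/p₂(n) → ∞. Then a_{1,p₁(n)} / a_{2,p₂(n)} → ∞ and, for every x > 0, P(Q_{p₁(n), p₂(n)} ≤ a_{1,p₁(n)} x) → Ψ_α(x) as n → ∞. (Proposition 2, Case 2, third subcase.) -/

import Mathlib

open MeasureTheory ProbabilityTheory Filter

noncomputable section

/-- The Fréchet distribution function with tail index `α`. -/
def frechetCDF (α x : ℝ) : ℝ := if 0 < x then Real.exp (-x ^ (-α)) else 0

/-- The norming constant `a_p = (Σ_{i<p} σ_i^α)^{1/α}`. -/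
def normConst (σ : ℕ → ℝ) (α : ℝ) (p : ℕ) : ℝ :=
  (∑ i ∈ Finset.range p, σ i ^ α) ^ (1 / α)

/-- Maximum of the first `p₁` variables of the first group and the first `p₂`
variables of the second group. -/
def Qmax {Ω : Type*} (X₁ X₂ : ℕ → Ω → ℝ) (p₁ p₂ : ℕ) (ω : Ω) : ℝ :=
  max (⨆ i : Fin p₁, X₁ i ω) (⨆ j : Fin p₂, X₂ j ω)

/-- Codomains of the family consisting of the factor `Z` and the two noise arrays. -/
def mixCodom (d : ℕ) : Unit ⊕ ℕ ⊕ ℕ → Type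
  | Sum.inl _ => Fin d → ℝ
  | Sum.inr _ => ℝ

instance mixCodomMeasurableSpace (d : ℕ) : ∀ i, MeasurableSpace (mixCodom d i)
  | Sum.inl _ => inferInstanceAs (MeasurableSpace (Fin d → ℝ))
  | Sum.inr (Sum.inl _) => inferInstanceAs (MeasurableSpace ℝ)
  | Sum.inr (Sum.inr _) => inferInstanceAs (MeasurableSpace ℝ)

/-- The family consisting of the factor `Z` and the two noise arrays. -/
def mixFun {Ω : Type*} {d : ℕ} (Z : Ω → Fin d → ℝ) (ε₁ ε₂ : ℕ → Ω → ℝ) :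
    ∀ i : Unit ⊕ ℕ ⊕ ℕ, Ω → mixCodom d i
  | Sum.inl _ => Z
  | Sum.inr (Sum.inl i) => ε₁ i
  | Sum.inr (Sum.inr j) => ε₂ j

lemma rpow_neg_anti {s t β : ℝ} (hs : 0 < s) (hst : s ≤ t) (hβ : 0 ≤ β) :
    t ^ (-β) ≤ s ^ (-β) := by
  rw [Real.rpow_neg (hs.trans_le hst).le, Real.rpow_neg hs.le]
  exact inv_anti₀ (Real.rpow_pos_of_pos hs β) (Real.rpow_le_rpow hs.le hst hβ)

lemma div_rpow_neg {s t β : ℝ} (h1 : 0 < s) (h2 : 0 < t) :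
    (s / t) ^ (-β) = t ^ β * s ^ (-β) := by
  rw [Real.rpow_neg (by positivity), Real.div_rpow h1.le h2.le, Real.rpow_neg h1.le]
  field_simp

lemma prod_one_sub_le_exp' {ι : Type*} (s : Finset ι) (q : ι → ℝ)
    (h1 : ∀ i ∈ s, q i ≤ 1) :
    ∏ i ∈ s, (1 - q i) ≤ Real.exp (-∑ i ∈ s, q i) := by
  rw [show (-∑ i ∈ s, q i) = ∑ i ∈ s, (-q i) by rw [Finset.sum_neg_distrib], Real.exp_sum]
  exact Finset.prod_le_prod (fun i hi => by linarith [h1 i hi])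
    (fun i hi => by linarith [Real.add_one_le_exp (-q i)])

lemma exp_le_prod_one_sub' {ι : Type*} (s : Finset ι) (q : ι → ℝ) (c : ℝ)
    (hc : c < 1) (h : ∀ i ∈ s, q i ∈ Set.Icc 0 c) :
    Real.exp (-((1 - c)⁻¹ * ∑ i ∈ s, q i)) ≤ ∏ i ∈ s, (1 - q i) := by
  have hc1 : 0 < 1 - c := by linarith
  rw [show (-((1 - c)⁻¹ * ∑ i ∈ s, q i)) = ∑ i ∈ s, (-((1 - c)⁻¹ * q i)) by
      rw [Finset.mul_sum, ← Finset.sum_neg_distrib], Real.exp_sum]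
  refine Finset.prod_le_prod (fun i _ => (Real.exp_pos _).le) (fun i hi => ?_)
  obtain ⟨hq0, hqc⟩ := h i hi
  have hq1 : 0 < 1 - q i := by linarith
  have hlog : 1 - (1 - q i)⁻¹ ≤ Real.log (1 - q i) := by
    have := Real.log_le_sub_one_of_pos (inv_pos.mpr hq1)
    rw [Real.log_inv] at this
    linarith
  have hinv : (1 - q i)⁻¹ ≤ (1 - c)⁻¹ := by
    apply inv_anti₀ hc1; linarith
  have : -((1 - c)⁻¹ * q i) ≤ Real.log (1 - q i) := by
    have h2 : 1 - (1 - q i)⁻¹ = -(q i * (1 - q i)⁻¹) := by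
      field_simp; ring
    nlinarith [mul_le_mul_of_nonneg_left hinv hq0]
  calc Real.exp (-((1 - c)⁻¹ * q i)) ≤ Real.exp (Real.log (1 - q i)) := Real.exp_le_exp.mpr this
    _ = 1 - q i := Real.exp_log hq1

lemma core_prod {α x M C₁ C₂ ℓ : ℝ} (hα : 0 < α) (hx : 0 < x) (hC₁ : 0 < C₁)
    (σ : ℕ → ℝ) (hσ : ∀ i, σ i ∈ Set.Icc C₁ C₂)
    (G : ℝ → ℝ)
    (htail : Tendsto (fun u => u ^ α * G u) atTop (nhds 1))
    (a : ℕ → ℝ) (ha : Tendsto a atTop atTop)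
    (p : ℕ → ℕ) (S : ℕ → ℝ) (hS : ∀ n, S n = ∑ i ∈ Finset.range (p n), σ i ^ α)
    (hℓ : 0 ≤ ℓ) (hSa : Tendsto (fun n => S n * (a n) ^ (-α)) atTop (nhds ℓ))
    (dd : ℕ → ℝ) (hd : ∀ i, |dd i| ≤ M) :
    Tendsto (fun n => ∏ i ∈ Finset.range (p n), (1 - G ((a n * x - dd i) / σ i))) atTop
      (nhds (Real.exp (-(ℓ * x ^ (-α))))) := by
  have hC₂ : 0 < C₂ := hC₁.trans_le ((hσ 0).1.trans (hσ 0).2)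
  have hM : 0 ≤ M := (abs_nonneg _).trans (hd 0)
  set y : ℝ := x ^ (-α) with hy
  have hy0 : 0 < y := Real.rpow_pos_of_pos hx _
  set L : ℝ := Real.exp (-(ℓ * y)) with hL
  rw [Metric.tendsto_nhds]
  intro ε hε
  -- choose δ
  have hcont_lo : Tendsto (fun δ : ℝ => Real.exp (-((1 - δ)⁻¹ * (1 + δ) * (ℓ * y))))
      (nhds 0) (nhds L) := by
    have h1 : ContinuousAt (fun δ : ℝ => (1 - δ)⁻¹ * (1 + δ) * (ℓ * y)) 0 := by
      apply ContinuousAt.mul _ continuousAt_const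
      exact ContinuousAt.mul
        (ContinuousAt.inv₀ (continuousAt_const.sub continuousAt_id) (by norm_num))
        (continuousAt_const.add continuousAt_id)
    have := ((Real.continuous_exp.continuousAt).comp h1.neg).tendsto
    norm_num at this ⊢
    exact this
  have hcont_hi : Tendsto (fun δ : ℝ => Real.exp (-((1 - δ) * (ℓ * y))))
      (nhds 0) (nhds L) := by
    have h1 : ContinuousAt (fun δ : ℝ => (1 - δ) * (ℓ * y)) 0 :=
      ContinuousAt.mul (continuousAt_const.sub continuousAt_id) continuousAt_const
    have := ((Real.continuous_exp.continuousAt).comp h1.neg).tendsto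
    norm_num at this ⊢
    exact this
  have hev : ∀ᶠ δ in nhds (0:ℝ),
      L - ε / 2 < Real.exp (-((1 - δ)⁻¹ * (1 + δ) * (ℓ * y))) ∧
      Real.exp (-((1 - δ) * (ℓ * y))) < L + ε / 2 :=
    Filter.Eventually.and
      (hcont_lo.eventually (eventually_gt_nhds (by linarith)))
      (hcont_hi.eventually (eventually_lt_nhds (by linarith)))
  obtain ⟨r, hr0, hr⟩ := Metric.eventually_nhds_iff.mp hev
  set δ : ℝ := min (r / 2) (1 / 4) with hδdef
  have hδ0 : 0 < δ := by positivity
  have hδhalf : δ < 1 / 2 := lt_of_le_of_lt (min_le_right _ _) (by norm_num)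
  have hδ1 : δ < 1 := by linarith
  obtain ⟨hψlo, hψhi⟩ := hr (show dist δ 0 < r by
    rw [Real.dist_eq, sub_zero, abs_of_pos hδ0]
    exact lt_of_le_of_lt (min_le_left _ _) (by linarith))
  -- tail threshold
  obtain ⟨T₀, hT₀⟩ := eventually_atTop.mp ((Metric.tendsto_nhds.mp htail) δ hδ0)
  set T : ℝ := max T₀ 1 with hTdef
  have hT1 : (1:ℝ) ≤ T := le_max_right _ _
  have hTpos : 0 < T := lt_of_lt_of_le one_pos hT1
  have hTbound : ∀ u : ℝ, T ≤ u →
      (1 - δ) * u ^ (-α) ≤ G u ∧ G u ≤ (1 + δ) * u ^ (-α) := by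
    intro u hu
    have hu0 : 0 < u := lt_of_lt_of_le hTpos hu
    have hq := hT₀ u (le_trans (le_max_left _ _) hu)
    rw [Real.dist_eq, abs_lt] at hq
    have hua : (0:ℝ) < u ^ α := Real.rpow_pos_of_pos hu0 α
    have huneg : u ^ (-α) = (u ^ α)⁻¹ := Real.rpow_neg hu0.le α
    constructor
    · rw [huneg, show (1 - δ) * (u ^ α)⁻¹ = (1 - δ) / u ^ α from by ring,
        div_le_iff₀ hua]
      nlinarith [hq.1]
    · rw [huneg, show (1 + δ) * (u ^ α)⁻¹ = (1 + δ) / u ^ α from by ring,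
        le_div_iff₀ hua]
      nlinarith [hq.2]
  -- convergence facts
  have hax : Tendsto (fun n => a n * x) atTop atTop := ha.atTop_mul_const hx
  have hKey : ∀ c : ℝ, Tendsto (fun n => S n * (a n * x + c) ^ (-α)) atTop (nhds (ℓ * y)) := by
    intro c
    have hdiv : Tendsto (fun n => c / a n) atTop (nhds 0) := tendsto_const_nhds.div_atTop ha
    have hb : Tendsto (fun n => (x + c / a n)⁻¹) atTop (nhds x⁻¹) := by
      have := (tendsto_const_nhds.add hdiv).inv₀ (by simpa using hx.ne' : x + 0 ≠ 0)
      norm_num at this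
      exact this
    have hcomp : Tendsto (fun n => ((x + c / a n)⁻¹) ^ α) atTop (nhds y) := by
      have h2 := (Real.continuousAt_rpow_const x⁻¹ α (Or.inl (by positivity))).tendsto.comp hb
      have h3 : (x⁻¹) ^ α = y := by
        rw [hy, Real.rpow_neg hx.le, ← Real.inv_rpow hx.le]
      rw [h3] at h2
      exact h2
    have hevent : ∀ᶠ n in atTop, S n * (a n) ^ (-α) * ((x + c / a n)⁻¹) ^ α
        = S n * (a n * x + c) ^ (-α) := by
      filter_upwards [ha.eventually_gt_atTop (max 1 (|c| + 1)),
        hax.eventually_gt_atTop (|c| + 1)] with n hn1 hn2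
      have han : 0 < a n := lt_of_le_of_lt (by positivity) (lt_of_le_of_lt (le_max_left _ _) hn1)
      have haxc : 0 < a n * x + c := by
        have : -|c| ≤ c := neg_abs_le c
        linarith
      have hxc : 0 < x + c / a n := by
        rw [show x + c / a n = (a n * x + c) / a n from by field_simp]
        positivity
      have h4 : (x + c / a n)⁻¹ = a n / (a n * x + c) := by
        rw [show x + c / a n = (a n * x + c) / a n from by field_simp, inv_div]
      have hrne : (a n : ℝ) ^ α ≠ 0 := (Real.rpow_pos_of_pos han α).ne'
      have hrne2 : (a n * x + c) ^ α ≠ 0 := (Real.rpow_pos_of_pos haxc α).ne'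
      rw [h4, Real.div_rpow han.le haxc.le, Real.rpow_neg haxc.le, Real.rpow_neg han.le]
      field_simp
    exact (hSa.mul hcomp).congr' hevent
  -- envelope sequences
  set c₁ : ℝ := (1 - δ)⁻¹ * (1 + δ) with hc₁
  have h1δ : (0:ℝ) < 1 - δ := by linarith
  have hc₁pos : 0 < c₁ := by rw [hc₁]; positivity
  have hLoT : Tendsto (fun n => Real.exp (-(c₁ * (S n * (a n * x - M) ^ (-α))))) atTop
      (nhds (Real.exp (-(c₁ * (ℓ * y))))) := by
    have h1 := ((hKey (-M)).const_mul c₁).neg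
    have h2 := (Real.continuous_exp.tendsto _).comp h1
    simpa [Function.comp_def, sub_eq_add_neg] using h2
  have hHiT : Tendsto (fun n => Real.exp (-((1 - δ) * (S n * (a n * x + M) ^ (-α))))) atTop
      (nhds (Real.exp (-((1 - δ) * (ℓ * y))))) := by
    have h1 := ((hKey M).const_mul (1 - δ)).neg
    have h2 := (Real.continuous_exp.tendsto _).comp h1
    simpa [Function.comp_def] using h2
  have hE3 : ∀ᶠ n in atTop, L - ε < Real.exp (-(c₁ * (S n * (a n * x - M) ^ (-α)))) :=
    hLoT.eventually (eventually_gt_nhds (by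
      have heq : (1 - δ)⁻¹ * (1 + δ) * (ℓ * y) = c₁ * (ℓ * y) := by rw [hc₁]
      rw [heq] at hψlo
      linarith))
  have hE4 : ∀ᶠ n in atTop,
      Real.exp (-((1 - δ) * (S n * (a n * x + M) ^ (-α)))) < L + ε :=
    hHiT.eventually (eventually_lt_nhds (by linarith))
  have hE1 : ∀ᶠ n in atTop, C₂ * T + M ≤ a n * x := hax.eventually_ge_atTop _
  have hE2 : ∀ᶠ n in atTop, (1 + δ) * (C₂ ^ α * (a n * x - M) ^ (-α)) ≤ δ := by
    have haxM : Tendsto (fun n => a n * x - M) atTop atTop :=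
      tendsto_atTop_add_const_right _ (-M) hax
    have h0 : Tendsto (fun n => (1 + δ) * (C₂ ^ α * (a n * x - M) ^ (-α))) atTop (nhds 0) := by
      have hz := (tendsto_rpow_neg_atTop hα).comp haxM
      have hz2 := (hz.const_mul (C₂ ^ α)).const_mul (1 + δ)
      simpa [Function.comp] using hz2
    exact h0.eventually (eventually_le_nhds hδ0)
  filter_upwards [hE1, hE2, hE3, hE4] with n h1 h2 h3 h4
  set A := a n * x with hA
  have hCTle : C₂ * T ≤ A - M := by linarith
  have hAMpos : 0 < A - M := lt_of_lt_of_le (by positivity) hCTle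
  have hAPpos : 0 < A + M := by linarith
  set q : ℕ → ℝ := fun i => G ((A - dd i) / σ i) with hqdef
  have hqi : ∀ i, q i ∈ Set.Icc 0 δ ∧ q i ≤ (1 + δ) * (σ i ^ α * (A - M) ^ (-α)) ∧
      (1 - δ) * (σ i ^ α * (A + M) ^ (-α)) ≤ q i := by
    intro i
    have hσpos : 0 < σ i := hC₁.trans_le (hσ i).1
    have hσle : σ i ≤ C₂ := (hσ i).2
    obtain ⟨hdl, hdu⟩ := abs_le.mp (hd i)
    set u := (A - dd i) / σ i with hu
    have hu_ge : (A - M) / σ i ≤ u := by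
      exact div_le_div_of_nonneg_right (by linarith) hσpos.le
    have hu_ge2 : (A - M) / C₂ ≤ (A - M) / σ i :=
      div_le_div_of_nonneg_left hAMpos.le hσpos hσle
    have hu_T : T ≤ u := by
      have : T = C₂ * T / C₂ := by field_simp
      rw [this]
      refine le_trans ?_ (le_trans hu_ge2 hu_ge)
      exact div_le_div_of_nonneg_right hCTle hC₂.le
    have hu0 : 0 < u := hTpos.trans_le hu_T
    have hu_le : u ≤ (A + M) / σ i := by
      exact div_le_div_of_nonneg_right (by linarith) hσpos.le
    obtain ⟨hlo, hhi⟩ := hTbound u hu_T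
    have hq0 : 0 ≤ q i := le_trans (by positivity) hlo
    have hqδ : q i ≤ δ := by
      have hstep : u ^ (-α) ≤ ((A - M) / C₂) ^ (-α) :=
        rpow_neg_anti (by positivity) (le_trans hu_ge2 hu_ge) hα.le
      have heq : ((A - M) / C₂) ^ (-α) = C₂ ^ α * (A - M) ^ (-α) := div_rpow_neg hAMpos hC₂
      calc q i ≤ (1 + δ) * u ^ (-α) := hhi
        _ ≤ (1 + δ) * (C₂ ^ α * (A - M) ^ (-α)) := by
            rw [← heq]; exact mul_le_mul_of_nonneg_left hstep (by linarith)
        _ ≤ δ := h2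
    refine ⟨⟨hq0, hqδ⟩, ?_, ?_⟩
    · have hstep : u ^ (-α) ≤ ((A - M) / σ i) ^ (-α) := rpow_neg_anti (by positivity) hu_ge hα.le
      have heq : ((A - M) / σ i) ^ (-α) = σ i ^ α * (A - M) ^ (-α) := div_rpow_neg hAMpos hσpos
      calc q i ≤ (1 + δ) * u ^ (-α) := hhi
        _ ≤ (1 + δ) * (σ i ^ α * (A - M) ^ (-α)) := by
            rw [← heq]; exact mul_le_mul_of_nonneg_left hstep (by linarith)
    · have hstep : ((A + M) / σ i) ^ (-α) ≤ u ^ (-α) := rpow_neg_anti hu0 hu_le hα.le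
      have heq : ((A + M) / σ i) ^ (-α) = σ i ^ α * (A + M) ^ (-α) := div_rpow_neg hAPpos hσpos
      calc (1 - δ) * (σ i ^ α * (A + M) ^ (-α)) = (1 - δ) * ((A + M) / σ i) ^ (-α) := by rw [heq]
        _ ≤ (1 - δ) * u ^ (-α) := mul_le_mul_of_nonneg_left hstep (by linarith)
        _ ≤ q i := hlo
  -- sum bounds
  have hQub : ∑ i ∈ Finset.range (p n), q i ≤ (1 + δ) * (S n * (A - M) ^ (-α)) := by
    calc ∑ i ∈ Finset.range (p n), q i
        ≤ ∑ i ∈ Finset.range (p n), (1 + δ) * (σ i ^ α * (A - M) ^ (-α)) :=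
          Finset.sum_le_sum fun i _ => (hqi i).2.1
      _ = (1 + δ) * (S n * (A - M) ^ (-α)) := by
          rw [← Finset.mul_sum, ← Finset.sum_mul, hS n]
  have hQlb : (1 - δ) * (S n * (A + M) ^ (-α)) ≤ ∑ i ∈ Finset.range (p n), q i := by
    calc (1 - δ) * (S n * (A + M) ^ (-α))
        = ∑ i ∈ Finset.range (p n), (1 - δ) * (σ i ^ α * (A + M) ^ (-α)) := by
          rw [← Finset.mul_sum, ← Finset.sum_mul, hS n]
      _ ≤ ∑ i ∈ Finset.range (p n), q i := Finset.sum_le_sum fun i _ => (hqi i).2.2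
  -- product bounds
  have hprod_ub : ∏ i ∈ Finset.range (p n), (1 - q i) < L + ε := by
    calc ∏ i ∈ Finset.range (p n), (1 - q i)
        ≤ Real.exp (-∑ i ∈ Finset.range (p n), q i) :=
          prod_one_sub_le_exp' _ _ fun i _ => le_trans (hqi i).1.2 (by linarith)
      _ ≤ Real.exp (-((1 - δ) * (S n * (A + M) ^ (-α)))) :=
          Real.exp_le_exp.mpr (by linarith)
      _ < L + ε := h4
  have hprod_lb : L - ε < ∏ i ∈ Finset.range (p n), (1 - q i) := by
    calc L - ε < Real.exp (-(c₁ * (S n * (A - M) ^ (-α)))) := h3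
      _ ≤ Real.exp (-((1 - δ)⁻¹ * ∑ i ∈ Finset.range (p n), q i)) := by
          apply Real.exp_le_exp.mpr
          have : c₁ * (S n * (A - M) ^ (-α)) = (1 - δ)⁻¹ * ((1 + δ) * (S n * (A - M) ^ (-α))) := by
            rw [hc₁]; ring
          rw [this]
          have h5 : (0:ℝ) ≤ (1 - δ)⁻¹ := by positivity
          exact neg_le_neg (mul_le_mul_of_nonneg_left hQub h5)
      _ ≤ ∏ i ∈ Finset.range (p n), (1 - q i) :=
          exp_le_prod_one_sub' _ _ δ hδ1 fun i _ => (hqi i).1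
  rw [Real.dist_eq, abs_sub_lt_iff]
  exact ⟨by linarith, by linarith⟩


section NC
variable {σ : ℕ → ℝ} {α C₁ C₂ : ℝ} (hC₁ : 0 < C₁) (hσ : ∀ i, σ i ∈ Set.Icc C₁ C₂) (hα : 0 < α)

include hC₁ hσ hα

lemma sum_rpow_ge (p : ℕ) : (p : ℝ) * C₁ ^ α ≤ ∑ i ∈ Finset.range p, σ i ^ α := by
  calc (p : ℝ) * C₁ ^ α = ∑ _i ∈ Finset.range p, C₁ ^ α := by
        rw [Finset.sum_const, Finset.card_range, nsmul_eq_mul]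
    _ ≤ _ := Finset.sum_le_sum fun i _ => Real.rpow_le_rpow hC₁.le (hσ i).1 hα.le

lemma sum_rpow_le (p : ℕ) : ∑ i ∈ Finset.range p, σ i ^ α ≤ (p : ℝ) * C₂ ^ α := by
  calc ∑ i ∈ Finset.range p, σ i ^ α ≤ ∑ _i ∈ Finset.range p, C₂ ^ α :=
        Finset.sum_le_sum fun i _ => Real.rpow_le_rpow (hC₁.le.trans (hσ i).1) (hσ i).2 hα.le
    _ = (p : ℝ) * C₂ ^ α := by rw [Finset.sum_const, Finset.card_range, nsmul_eq_mul]

lemma normConst_ge (p : ℕ) : C₁ * (p : ℝ) ^ (1 / α) ≤ normConst σ α p := by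
  have h := Real.rpow_le_rpow (by positivity) (sum_rpow_ge hC₁ hσ hα p) (by positivity : (0:ℝ) ≤ 1/α)
  calc C₁ * (p : ℝ) ^ (1 / α) = ((p : ℝ) * C₁ ^ α) ^ (1 / α) := by
        rw [Real.mul_rpow (by positivity) (by positivity), ← Real.rpow_mul hC₁.le,
          mul_one_div, div_self hα.ne', Real.rpow_one, mul_comm]
    _ ≤ _ := h

lemma normConst_le (p : ℕ) : normConst σ α p ≤ C₂ * (p : ℝ) ^ (1 / α) := by
  have hC₂ : 0 < C₂ := hC₁.trans_le ((hσ 0).1.trans (hσ 0).2)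
  have hS0 : (0:ℝ) ≤ ∑ i ∈ Finset.range p, σ i ^ α :=
    le_trans (by positivity) (sum_rpow_ge hC₁ hσ hα p)
  have h := Real.rpow_le_rpow hS0 (sum_rpow_le hC₁ hσ hα p) (by positivity : (0:ℝ) ≤ 1/α)
  calc normConst σ α p ≤ ((p : ℝ) * C₂ ^ α) ^ (1 / α) := by
        refine le_trans ?_ h
        apply le_of_eq
        rfl
    _ = C₂ * (p : ℝ) ^ (1 / α) := by
        rw [Real.mul_rpow (by positivity) (by positivity), ← Real.rpow_mul hC₂.le,
          mul_one_div, div_self hα.ne', Real.rpow_one, mul_comm]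

lemma normConst_pos {p : ℕ} (hp : 0 < p) : 0 < normConst σ α p := by
  refine lt_of_lt_of_le ?_ (normConst_ge hC₁ hσ hα p)
  have : (0:ℝ) < (p:ℝ) := by exact_mod_cast hp
  positivity

lemma normConst_rpow_alpha {p : ℕ} (hp : 0 < p) : normConst σ α p ^ α = ∑ i ∈ Finset.range p, σ i ^ α := by
  have hS : 0 < ∑ i ∈ Finset.range p, σ i ^ α := by
    refine lt_of_lt_of_le ?_ (sum_rpow_ge hC₁ hσ hα p)
    have : (0:ℝ) < (p:ℝ) := by exact_mod_cast hp
    positivity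
  rw [normConst, ← Real.rpow_mul hS.le, one_div, inv_mul_cancel₀ hα.ne', Real.rpow_one]

lemma normConst_tendsto_atTop (p : ℕ → ℕ) (hp : Tendsto (fun n => (p n : ℝ)) atTop atTop) :
    Tendsto (fun n => normConst σ α (p n)) atTop atTop := by
  apply tendsto_atTop_mono (fun n => normConst_ge hC₁ hσ hα (p n))
  exact (tendsto_const_mul_atTop_of_pos hC₁).mpr
    ((tendsto_rpow_atTop (by positivity : (0:ℝ) < 1/α)).comp hp)

end NC

lemma part1 {σ σt : ℕ → ℝ} {α C₁ C₂ : ℝ} (hC₁ : 0 < C₁)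
    (hσ : ∀ i, σ i ∈ Set.Icc C₁ C₂) (hσt : ∀ j, σt j ∈ Set.Icc C₁ C₂) (hα : 0 < α)
    (p₁ p₂ : ℕ → ℕ) (hp₂pos : ∀ n, 0 < p₂ n)
    (hratio : Tendsto (fun n => (p₁ n : ℝ) / (p₂ n : ℝ)) atTop atTop) :
    Tendsto (fun n => normConst σ α (p₁ n) / normConst σt α (p₂ n)) atTop atTop := by
  have hC₂ : 0 < C₂ := hC₁.trans_le ((hσ 0).1.trans (hσ 0).2)
  have hmain : ∀ n, (C₁ / C₂) * ((p₁ n : ℝ) / (p₂ n : ℝ)) ^ (1 / α) ≤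
      normConst σ α (p₁ n) / normConst σt α (p₂ n) := by
    intro n
    have hp2 : (0:ℝ) < (p₂ n : ℝ) := by exact_mod_cast hp₂pos n
    have hb : 0 < normConst σt α (p₂ n) := normConst_pos hC₁ hσt hα (hp₂pos n)
    have h1 : C₁ * (p₁ n : ℝ) ^ (1 / α) ≤ normConst σ α (p₁ n) := normConst_ge hC₁ hσ hα _
    have h2 : normConst σt α (p₂ n) ≤ C₂ * (p₂ n : ℝ) ^ (1 / α) := normConst_le hC₁ hσt hα _
    have key : (C₁ * (p₁ n : ℝ) ^ (1 / α)) / (C₂ * (p₂ n : ℝ) ^ (1 / α)) ≤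
        normConst σ α (p₁ n) / normConst σt α (p₂ n) := by
      exact div_le_div₀ (le_trans (by positivity) h1) h1 hb h2
    refine le_trans (le_of_eq ?_) key
    rw [Real.div_rpow (by positivity) hp2.le, div_mul_div_comm]
  apply tendsto_atTop_mono hmain
  exact (tendsto_const_mul_atTop_of_pos (by positivity)).mpr
    ((tendsto_rpow_atTop (by positivity : (0:ℝ) < 1/α)).comp hratio)


lemma qmax_factorization
    {Ω : Type*} [MeasurableSpace Ω] (P : Measure Ω) [IsProbabilityMeasure P]
    (d : ℕ) (Z : Ω → Fin d → ℝ) (hZm : Measurable Z)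
    (f g : ℕ → (Fin d → ℝ) → ℝ) (hfm : ∀ i, Measurable (f i)) (hgm : ∀ j, Measurable (g j))
    (σ σt : ℕ → ℝ) (hσpos : ∀ i, 0 < σ i) (hσtpos : ∀ j, 0 < σt j)
    (ε₁ ε₂ : ℕ → Ω → ℝ) (hε₁m : ∀ i, Measurable (ε₁ i)) (hε₂m : ∀ j, Measurable (ε₂ j))
    (hid₁ : ∀ i, IdentDistrib (ε₁ i) (ε₁ 0) P P)
    (hid₂ : ∀ j, IdentDistrib (ε₂ j) (ε₂ 0) P P)
    (hindep : iIndepFun (m := fun i => mixCodomMeasurableSpace d i) (mixFun Z ε₁ ε₂) P)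
    (X₁ X₂ : ℕ → Ω → ℝ)
    (hX₁ : ∀ i ω, X₁ i ω = f i (Z ω) + σ i * ε₁ i ω)
    (hX₂ : ∀ j ω, X₂ j ω = g j (Z ω) + σt j * ε₂ j ω)
    (p q : ℕ) (hp : 0 < p) (hq : 0 < q) (t : ℝ) :
    P {ω | Qmax X₁ X₂ p q ω ≤ t} =
      ∫⁻ z, (∏ i ∈ Finset.range p, P (ε₁ 0 ⁻¹' Set.Iic ((t - f i z) / σ i))) *
        (∏ j ∈ Finset.range q, P (ε₂ 0 ⁻¹' Set.Iic ((t - g j z) / σt j))) ∂(P.map Z) := by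
  classical
  haveI : Nonempty (Fin p) := Fin.pos_iff_nonempty.mp hp
  haveI : Nonempty (Fin q) := Fin.pos_iff_nonempty.mp hq
  set W : Ω → (Fin p → ℝ) × (Fin q → ℝ) :=
    fun ω => (fun i => ε₁ i ω, fun j => ε₂ j ω) with hWdef
  have hWm : Measurable W :=
    Measurable.prodMk (measurable_pi_lambda _ fun i => hε₁m i)
      (measurable_pi_lambda _ fun j => hε₂m j)
  set B : Set ((Fin d → ℝ) × ((Fin p → ℝ) × (Fin q → ℝ))) :=
    {zw | (∀ i : Fin p, f (i : ℕ) zw.1 + σ (i : ℕ) * zw.2.1 i ≤ t) ∧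
      (∀ j : Fin q, g (j : ℕ) zw.1 + σt (j : ℕ) * zw.2.2 j ≤ t)} with hBdef
  have hBmeas : MeasurableSet B := by
    rw [hBdef, Set.setOf_and]
    apply MeasurableSet.inter
    · rw [Set.setOf_forall]
      refine MeasurableSet.iInter fun i => measurableSet_le ?_ measurable_const
      exact ((hfm i).comp measurable_fst).add
        (measurable_const.mul ((measurable_pi_apply (i : Fin p)).comp
          (measurable_fst.comp measurable_snd)))
    · rw [Set.setOf_forall]
      refine MeasurableSet.iInter fun j => measurableSet_le ?_ measurable_const
      exact ((hgm j).comp measurable_fst).add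
        (measurable_const.mul ((measurable_pi_apply (j : Fin q)).comp
          (measurable_snd.comp measurable_snd)))
  have hevent : {ω | Qmax X₁ X₂ p q ω ≤ t} = (fun ω => (Z ω, W ω)) ⁻¹' B := by
    ext ω
    simp only [Set.mem_setOf_eq, Set.mem_preimage, hBdef, Qmax, max_le_iff]
    rw [ciSup_le_iff (Set.finite_range _).bddAbove, ciSup_le_iff (Set.finite_range _).bddAbove]
    constructor
    · rintro ⟨h1, h2⟩
      exact ⟨fun i => by have := h1 i; rwa [hX₁] at this,
        fun j => by have := h2 j; rwa [hX₂] at this⟩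
    · rintro ⟨h1, h2⟩
      exact ⟨fun i => by rw [hX₁]; exact h1 i, fun j => by rw [hX₂]; exact h2 j⟩
  -- independence of Z and W
  set Tfin : Finset (Unit ⊕ ℕ ⊕ ℕ) :=
    (Finset.range p).image (fun i => Sum.inr (Sum.inl i)) ∪
    (Finset.range q).image (fun j => Sum.inr (Sum.inr j)) with hTfin
  have hmem₁ : ∀ i : Fin p, (Sum.inr (Sum.inl (i : ℕ)) : Unit ⊕ ℕ ⊕ ℕ) ∈ Tfin := fun i =>
    Finset.mem_union_left _ (Finset.mem_image_of_mem _ (Finset.mem_range.mpr i.isLt))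
  have hmem₂ : ∀ j : Fin q, (Sum.inr (Sum.inr (j : ℕ)) : Unit ⊕ ℕ ⊕ ℕ) ∈ Tfin := fun j =>
    Finset.mem_union_right _ (Finset.mem_image_of_mem _ (Finset.mem_range.mpr j.isLt))
  have hmeasAll : ∀ k, Measurable (mixFun Z ε₁ ε₂ k) := by
    rintro (⟨⟩ | i | j)
    exacts [hZm, hε₁m i, hε₂m j]
  have hZW : IndepFun Z W P := by
    have hdisj : Disjoint ({Sum.inl ()} : Finset (Unit ⊕ ℕ ⊕ ℕ)) Tfin := by
      rw [Finset.disjoint_left]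
      rintro a ha hb
      rw [Finset.mem_singleton] at ha
      subst ha
      simp [hTfin] at hb
    have base := hindep.indepFun_finset {Sum.inl ()} Tfin hdisj hmeasAll
    have hφ : Measurable (fun v : (∀ k : ({Sum.inl ()} : Finset (Unit ⊕ ℕ ⊕ ℕ)), mixCodom d k) =>
        v ⟨Sum.inl (), Finset.mem_singleton_self _⟩) := measurable_pi_apply _
    have hψ : Measurable (fun v : (∀ k : Tfin, mixCodom d k) =>
        ((fun i : Fin p => v ⟨Sum.inr (Sum.inl (i : ℕ)), hmem₁ i⟩,
          fun j : Fin q => v ⟨Sum.inr (Sum.inr (j : ℕ)), hmem₂ j⟩) :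
          (Fin p → ℝ) × (Fin q → ℝ))) :=
      Measurable.prodMk (measurable_pi_lambda _ fun i => measurable_pi_apply _)
        (measurable_pi_lambda _ fun j => measurable_pi_apply _)
    exact base.comp hφ hψ
  have hmap := (ProbabilityTheory.indepFun_iff_map_prod_eq_prod_map_map
    hZm.aemeasurable hWm.aemeasurable).mp hZW
  have hiff : ∀ (c e w' : ℝ), 0 < c → (e + c * w' ≤ t ↔ w' ≤ (t - e) / c) := by
    intro c e w' hc
    rw [le_div_iff₀ hc, mul_comm]
    constructor <;> intro h <;> linarith
  calc P {ω | Qmax X₁ X₂ p q ω ≤ t}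
      = P ((fun ω => (Z ω, W ω)) ⁻¹' B) := by rw [hevent]
    _ = (P.map (fun ω => (Z ω, W ω))) B := (Measure.map_apply (hZm.prodMk hWm) hBmeas).symm
    _ = ((P.map Z).prod (P.map W)) B := by rw [hmap]
    _ = ∫⁻ z, (P.map W) (Prod.mk z ⁻¹' B) ∂(P.map Z) := Measure.prod_apply hBmeas
    _ = _ := by
      refine lintegral_congr fun z => ?_
      set sets : ∀ k : Unit ⊕ ℕ ⊕ ℕ, Set (mixCodom d k) := fun k =>
        match k with
        | Sum.inl _ => Set.univ
        | Sum.inr (Sum.inl i) => (Set.Iic ((t - f i z) / σ i) : Set ℝ)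
        | Sum.inr (Sum.inr j) => (Set.Iic ((t - g j z) / σt j) : Set ℝ) with hsets
      have hsetsm : ∀ k, k ∈ Tfin → MeasurableSet[mixCodomMeasurableSpace d k] (sets k) := by
        rintro (⟨⟩ | i | j) _ <;> rw [hsets]
        · exact MeasurableSet.univ
        · exact (measurableSet_Iic : MeasurableSet (Set.Iic ((t - f i z) / σ i)))
        · exact (measurableSet_Iic : MeasurableSet (Set.Iic ((t - g j z) / σt j)))
      have hseteq : W ⁻¹' (Prod.mk z ⁻¹' B) = ⋂ k ∈ Tfin, mixFun Z ε₁ ε₂ k ⁻¹' sets k := by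
        rw [hTfin, Finset.set_biInter_inter, Finset.set_biInter_finset_image,
          Finset.set_biInter_finset_image]
        ext ω
        simp only [Set.mem_preimage, Set.mem_inter_iff, Set.mem_iInter, hBdef, Set.mem_setOf_eq,
          Finset.mem_range, hsets, Set.mem_Iic]
        constructor
        · rintro ⟨h1, h2⟩
          exact ⟨fun i hi => ((hiff _ _ _ (hσpos i)).mp (h1 ⟨i, hi⟩)),
            fun j hj => ((hiff _ _ _ (hσtpos j)).mp (h2 ⟨j, hj⟩))⟩
        · rintro ⟨h1, h2⟩
          exact ⟨fun i => (hiff _ _ _ (hσpos i)).mpr (h1 i i.isLt),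
            fun j => (hiff _ _ _ (hσtpos j)).mpr (h2 j j.isLt)⟩
      have hinter := hindep.measure_inter_preimage_eq_mul Tfin hsetsm
      have hdisj2 : Disjoint ((Finset.range p).image (fun i => (Sum.inr (Sum.inl i) : Unit ⊕ ℕ ⊕ ℕ)))
          ((Finset.range q).image (fun j => (Sum.inr (Sum.inr j) : Unit ⊕ ℕ ⊕ ℕ))) := by
        rw [Finset.disjoint_left]
        rintro a ha hb
        simp only [Finset.mem_image, Finset.mem_range] at ha hb
        obtain ⟨i, _, rfl⟩ := ha
        obtain ⟨j, _, hj⟩ := hb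
        exact (by simpa using hj : False)
      have hinj₁ : Set.InjOn (fun i => (Sum.inr (Sum.inl i) : Unit ⊕ ℕ ⊕ ℕ)) (Finset.range p) :=
        fun a _ b _ h => by simpa using h
      have hinj₂ : Set.InjOn (fun j => (Sum.inr (Sum.inr j) : Unit ⊕ ℕ ⊕ ℕ)) (Finset.range q) :=
        fun a _ b _ h => by simpa using h
      calc (P.map W) (Prod.mk z ⁻¹' B)
          = P (W ⁻¹' (Prod.mk z ⁻¹' B)) :=
            Measure.map_apply hWm (hBmeas.preimage measurable_prodMk_left)
        _ = P (⋂ k ∈ Tfin, mixFun Z ε₁ ε₂ k ⁻¹' sets k) := by rw [hseteq]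
        _ = ∏ k ∈ Tfin, P (mixFun Z ε₁ ε₂ k ⁻¹' sets k) := hinter
        _ = (∏ i ∈ Finset.range p, P (ε₁ i ⁻¹' Set.Iic ((t - f i z) / σ i))) *
            (∏ j ∈ Finset.range q, P (ε₂ j ⁻¹' Set.Iic ((t - g j z) / σt j))) := by
            rw [hTfin, Finset.prod_union hdisj2, Finset.prod_image (fun a ha b hb h => hinj₁ ha hb h),
              Finset.prod_image (fun a ha b hb h => hinj₂ ha hb h), hsets]
            rfl
        _ = (∏ i ∈ Finset.range p, P (ε₁ 0 ⁻¹' Set.Iic ((t - f i z) / σ i))) *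
            (∏ j ∈ Finset.range q, P (ε₂ 0 ⁻¹' Set.Iic ((t - g j z) / σt j))) := by
            rw [Finset.prod_congr rfl fun i _ => (hid₁ i).measure_mem_eq measurableSet_Iic,
              Finset.prod_congr rfl fun j _ => (hid₂ j).measure_mem_eq measurableSet_Iic]


/-- Prop. 2, Case 2, third subcase: `α₁ = α₂ = α` and `p₁/p₂ → ∞` imply `a₁/a₂ → ∞` and `P(Q ≤ a₁ x) → Ψ_α(x)` for all `x > 0`. -/
theorem prop2_case2_sub3
    {Ω : Type*} [MeasurableSpace Ω] (P : Measure Ω) [IsProbabilityMeasure P]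
    (d : ℕ) (Z : Ω → Fin d → ℝ) (hZm : Measurable Z)
    (f g : ℕ → (Fin d → ℝ) → ℝ) (hfm : ∀ i, Measurable (f i)) (hgm : ∀ j, Measurable (g j))
    (hfbdd : ∀ᵐ ω ∂P, ∃ M : ℝ, ∀ i, |f i (Z ω)| ≤ M)
    (hgbdd : ∀ᵐ ω ∂P, ∃ M : ℝ, ∀ j, |g j (Z ω)| ≤ M)
    (C₁ C₂ : ℝ) (hC₁ : 0 < C₁) (hC₁₂ : C₁ ≤ C₂)
    (σ σt : ℕ → ℝ) (hσ : ∀ i, σ i ∈ Set.Icc C₁ C₂) (hσt : ∀ j, σt j ∈ Set.Icc C₁ C₂)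
    (α₁ α₂ : ℝ) (hα₁ : 0 < α₁) (hα₂ : 0 < α₂)
    (ε₁ ε₂ : ℕ → Ω → ℝ) (hε₁m : ∀ i, Measurable (ε₁ i)) (hε₂m : ∀ j, Measurable (ε₂ j))
    (hid₁ : ∀ i, IdentDistrib (ε₁ i) (ε₁ 0) P P)
    (hid₂ : ∀ j, IdentDistrib (ε₂ j) (ε₂ 0) P P)
    (hindep : iIndepFun (m := fun i => mixCodomMeasurableSpace d i) (mixFun Z ε₁ ε₂) P)
    (htail₁ : Tendsto (fun x : ℝ => x ^ α₁ * (P {ω | x < ε₁ 0 ω}).toReal) atTop (nhds 1))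
    (htail₂ : Tendsto (fun x : ℝ => x ^ α₂ * (P {ω | x < ε₂ 0 ω}).toReal) atTop (nhds 1))
    (X₁ X₂ : ℕ → Ω → ℝ)
    (hX₁ : ∀ i ω, X₁ i ω = f i (Z ω) + σ i * ε₁ i ω)
    (hX₂ : ∀ j ω, X₂ j ω = g j (Z ω) + σt j * ε₂ j ω)
    (p₁ p₂ : ℕ → ℕ) (hp₁pos : ∀ n, 0 < p₁ n) (hp₂pos : ∀ n, 0 < p₂ n)
    (hp₁ : Tendsto (fun n => (p₁ n : ℝ)) atTop atTop)
    (hp₂ : Tendsto (fun n => (p₂ n : ℝ)) atTop atTop)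
    (α : ℝ) (hα₁α : α₁ = α) (hα₂α : α₂ = α)
    (hratio : Tendsto (fun n => (p₁ n : ℝ) / (p₂ n : ℝ)) atTop atTop) :
    Tendsto (fun n => normConst σ α₁ (p₁ n) / normConst σt α₂ (p₂ n)) atTop atTop ∧
    ∀ x : ℝ, 0 < x →
      Tendsto (fun n => (P {ω | Qmax X₁ X₂ (p₁ n) (p₂ n) ω ≤ normConst σ α₁ (p₁ n) * x}).toReal) atTop (nhds (frechetCDF α x)) := by

  subst hα₁α
  rw [hα₂α] at htail₂ hα₂ ⊢
  clear hα₂α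
  have hα : 0 < α₁ := hα₁
  have hC₂ : 0 < C₂ := lt_of_lt_of_le hC₁ hC₁₂
  have hσpos : ∀ i, 0 < σ i := fun i => lt_of_lt_of_le hC₁ (hσ i).1
  have hσtpos : ∀ j, 0 < σt j := fun j => lt_of_lt_of_le hC₁ (hσt j).1
  have hP1 : Tendsto (fun n => normConst σ α₁ (p₁ n) / normConst σt α₁ (p₂ n)) atTop atTop :=
    part1 hC₁ hσ hσt hα p₁ p₂ hp₂pos hratio
  refine ⟨hP1, ?_⟩
  intro x hx
  have hyx : (0:ℝ) < x ^ (-α₁) := Real.rpow_pos_of_pos hx _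
  set ν := P.map Z with hν
  haveI : IsProbabilityMeasure ν := Measure.isProbabilityMeasure_map hZm.aemeasurable
  set a : ℕ → ℝ := fun n => normConst σ α₁ (p₁ n) with ha
  set b : ℕ → ℝ := fun n => normConst σt α₁ (p₂ n) with hb
  have haT : Tendsto a atTop atTop := normConst_tendsto_atTop hC₁ hσ hα p₁ hp₁
  set G₁ : ℝ → ℝ := fun u => (P {ω | u < ε₁ 0 ω}).toReal with hG₁
  set G₂ : ℝ → ℝ := fun u => (P {ω | u < ε₂ 0 ω}).toReal with hG₂
  have htail₁' : Tendsto (fun u => u ^ α₁ * G₁ u) atTop (nhds 1) := htail₁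
  have htail₂' : Tendsto (fun u => u ^ α₁ * G₂ u) atTop (nhds 1) := htail₂
  have hG₁m : Measurable G₁ := by
    rw [hG₁]
    have hanti : Antitone (fun u : ℝ => P {ω | u < ε₁ 0 ω}) := fun u v huv =>
      measure_mono (fun ω hω => lt_of_le_of_lt huv hω)
    exact hanti.measurable.ennreal_toReal
  have hG₂m : Measurable G₂ := by
    rw [hG₂]
    have hanti : Antitone (fun u : ℝ => P {ω | u < ε₂ 0 ω}) := fun u v huv =>
      measure_mono (fun ω hω => lt_of_le_of_lt huv hω)
    exact hanti.measurable.ennreal_toReal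
  have hG₁01 : ∀ u, 0 ≤ G₁ u ∧ G₁ u ≤ 1 := fun u =>
    ⟨ENNReal.toReal_nonneg, by
      rw [hG₁]
      exact ENNReal.toReal_le_of_le_ofReal one_pos.le (by simpa using prob_le_one)⟩
  have hG₂01 : ∀ u, 0 ≤ G₂ u ∧ G₂ u ≤ 1 := fun u =>
    ⟨ENNReal.toReal_nonneg, by
      rw [hG₂]
      exact ENNReal.toReal_le_of_le_ofReal one_pos.le (by simpa using prob_le_one)⟩
  have hcdf : ∀ (h : Ω → ℝ), Measurable h → ∀ u : ℝ,
      (P (h ⁻¹' Set.Iic u)).toReal = 1 - (P {ω | u < h ω}).toReal := by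
    intro h hm u
    have hset : h ⁻¹' Set.Iic u = {ω | u < h ω}ᶜ := by
      ext ω; simp [not_lt]
    have hms : MeasurableSet {ω | u < h ω} := measurableSet_lt measurable_const hm
    rw [hset, measure_compl hms (measure_ne_top P _), measure_univ,
      ENNReal.toReal_sub_of_le prob_le_one ENNReal.one_ne_top, ENNReal.toReal_one]
  -- real integrand
  set h : ℕ → (Fin d → ℝ) → ℝ := fun n z =>
    (∏ i ∈ Finset.range (p₁ n), (1 - G₁ ((a n * x - f i z) / σ i))) *
    (∏ j ∈ Finset.range (p₂ n), (1 - G₂ ((a n * x - g j z) / σt j))) with hh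
  have hφ₁ : Measurable (fun u : ℝ => P (ε₁ 0 ⁻¹' Set.Iic u)) :=
    Monotone.measurable (fun u v huv =>
      measure_mono (Set.preimage_mono (Set.Iic_subset_Iic.mpr huv)))
  have hφ₂ : Measurable (fun u : ℝ => P (ε₂ 0 ⁻¹' Set.Iic u)) :=
    Monotone.measurable (fun u v huv =>
      measure_mono (Set.preimage_mono (Set.Iic_subset_Iic.mpr huv)))
  have hHmeas : ∀ n, Measurable (fun z : Fin d → ℝ =>
      (∏ i ∈ Finset.range (p₁ n), P (ε₁ 0 ⁻¹' Set.Iic ((a n * x - f i z) / σ i))) *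
      (∏ j ∈ Finset.range (p₂ n), P (ε₂ 0 ⁻¹' Set.Iic ((a n * x - g j z) / σt j)))) := by
    intro n
    refine Measurable.mul ?_ ?_
    · exact Finset.measurable_prod _ fun i _ =>
        hφ₁.comp ((measurable_const.sub (hfm i)).div_const _)
    · exact Finset.measurable_prod _ fun j _ =>
        hφ₂.comp ((measurable_const.sub (hgm j)).div_const _)
  have hHle1 : ∀ n (z : Fin d → ℝ),
      (∏ i ∈ Finset.range (p₁ n), P (ε₁ 0 ⁻¹' Set.Iic ((a n * x - f i z) / σ i))) *
      (∏ j ∈ Finset.range (p₂ n), P (ε₂ 0 ⁻¹' Set.Iic ((a n * x - g j z) / σt j))) ≤ 1 := by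
    intro n z
    exact mul_le_one' (Finset.prod_le_one (fun i _ => zero_le) (fun i _ => prob_le_one))
      (Finset.prod_le_one (fun j _ => zero_le) (fun j _ => prob_le_one))
  have hEq : ∀ n, (P {ω | Qmax X₁ X₂ (p₁ n) (p₂ n) ω ≤ normConst σ α₁ (p₁ n) * x}).toReal
      = ∫ z, h n z ∂ν := by
    intro n
    rw [qmax_factorization P d Z hZm f g hfm hgm σ σt hσpos hσtpos ε₁ ε₂ hε₁m hε₂m hid₁ hid₂
      hindep X₁ X₂ hX₁ hX₂ (p₁ n) (p₂ n) (hp₁pos n) (hp₂pos n) (normConst σ α₁ (p₁ n) * x)]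
    rw [← MeasureTheory.integral_toReal (hHmeas n).aemeasurable
      (Filter.Eventually.of_forall fun z => lt_of_le_of_lt (hHle1 n z) ENNReal.one_lt_top)]
    refine integral_congr_ae (Filter.Eventually.of_forall fun z => ?_)
    show ((∏ i ∈ Finset.range (p₁ n), P (ε₁ 0 ⁻¹' Set.Iic ((a n * x - f i z) / σ i))) *
      ∏ j ∈ Finset.range (p₂ n), P (ε₂ 0 ⁻¹' Set.Iic ((a n * x - g j z) / σt j))).toReal = h n z
    rw [ENNReal.toReal_mul, ENNReal.toReal_prod, ENNReal.toReal_prod, hh]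
    congr 1
    · exact Finset.prod_congr rfl fun i _ => hcdf (ε₁ 0) (hε₁m 0) _
    · exact Finset.prod_congr rfl fun j _ => hcdf (ε₂ 0) (hε₂m 0) _
  -- a.e. pointwise convergence
  have hfae : ∀ᵐ z ∂ν, ∃ m : ℕ, ∀ i, |f i z| ≤ (m : ℝ) := by
    have hS'meas : MeasurableSet {z : Fin d → ℝ | ∃ m : ℕ, ∀ i, |f i z| ≤ (m : ℝ)} := by
      rw [Set.setOf_exists]
      refine MeasurableSet.iUnion fun m => ?_
      rw [Set.setOf_forall]
      exact MeasurableSet.iInter fun i => measurableSet_le (hfm i).abs measurable_const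
    refine (MeasureTheory.ae_map_iff hZm.aemeasurable hS'meas).mpr ?_
    refine hfbdd.mono fun ω hω => ?_
    obtain ⟨M, hM⟩ := hω
    exact ⟨⌈M⌉₊, fun i => (hM i).trans (Nat.le_ceil M)⟩
  have hgae : ∀ᵐ z ∂ν, ∃ m : ℕ, ∀ j, |g j z| ≤ (m : ℝ) := by
    have hS'meas : MeasurableSet {z : Fin d → ℝ | ∃ m : ℕ, ∀ j, |g j z| ≤ (m : ℝ)} := by
      rw [Set.setOf_exists]
      refine MeasurableSet.iUnion fun m => ?_
      rw [Set.setOf_forall]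
      exact MeasurableSet.iInter fun j => measurableSet_le (hgm j).abs measurable_const
    refine (MeasureTheory.ae_map_iff hZm.aemeasurable hS'meas).mpr ?_
    refine hgbdd.mono fun ω hω => ?_
    obtain ⟨M, hM⟩ := hω
    exact ⟨⌈M⌉₊, fun j => (hM j).trans (Nat.le_ceil M)⟩
  have hSa₁ : Tendsto (fun n => (∑ i ∈ Finset.range (p₁ n), σ i ^ α₁) * a n ^ (-α₁))
      atTop (nhds 1) := by
    have hone : ∀ n, (∑ i ∈ Finset.range (p₁ n), σ i ^ α₁) * a n ^ (-α₁) = 1 := by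
      intro n
      have hapos : 0 < a n := normConst_pos hC₁ hσ hα (hp₁pos n)
      have hA : a n ^ α₁ = ∑ i ∈ Finset.range (p₁ n), σ i ^ α₁ :=
        normConst_rpow_alpha hC₁ hσ hα (hp₁pos n)
      rw [Real.rpow_neg hapos.le, hA]
      exact mul_inv_cancel₀ (by rw [← hA]; exact (Real.rpow_pos_of_pos hapos _).ne')
    exact tendsto_const_nhds.congr fun n => (hone n).symm
  have hba : Tendsto (fun n => b n / a n) atTop (nhds 0) := by
    have := hP1.inv_tendsto_atTop
    refine this.congr fun n => ?_
    rw [Pi.inv_apply, inv_div]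
  have hSa₂ : Tendsto (fun n => (∑ j ∈ Finset.range (p₂ n), σt j ^ α₁) * a n ^ (-α₁))
      atTop (nhds 0) := by
    have hrp := (Real.continuousAt_rpow_const 0 α₁ (Or.inr hα.le)).tendsto.comp hba
    rw [Real.zero_rpow hα.ne'] at hrp
    refine (hrp.congr fun n => ?_)
    have hapos : 0 < a n := normConst_pos hC₁ hσ hα (hp₁pos n)
    have hbpos : 0 < b n := normConst_pos hC₁ hσt hα (hp₂pos n)
    show (b n / a n) ^ α₁ = _
    rw [Real.div_rpow hbpos.le hapos.le, normConst_rpow_alpha hC₁ hσt hα (hp₂pos n),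
      Real.rpow_neg hapos.le, div_eq_mul_inv]
  have hlim : ∀ᵐ z ∂ν, Tendsto (fun n => h n z) atTop (nhds (frechetCDF α₁ x)) := by
    filter_upwards [hfae, hgae] with z hMf hMg
    obtain ⟨Mf, hMf⟩ := hMf
    obtain ⟨Mg, hMg⟩ := hMg
    have hcore1 := core_prod hα hx hC₁ σ hσ G₁ htail₁' a haT p₁ _ (fun n => rfl)
      zero_le_one hSa₁ (fun i => f i z) (fun i => (hMf i).trans (le_max_left (Mf:ℝ) (Mg:ℝ)))
    have hcore2 := core_prod hα hx hC₁ σt hσt G₂ htail₂' a haT p₂ _ (fun n => rfl)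
      le_rfl hSa₂ (fun j => g j z) (fun j => (hMg j).trans (le_max_right (Mf:ℝ) (Mg:ℝ)))
    have hmul := hcore1.mul hcore2
    have hval : Real.exp (-(1 * x ^ (-α₁))) * Real.exp (-(0 * x ^ (-α₁))) = frechetCDF α₁ x := by
      rw [frechetCDF, if_pos hx]
      norm_num
    rw [hval] at hmul
    exact hmul.congr fun n => by rw [hh]
  have hmeasR : ∀ n, AEStronglyMeasurable (fun z => h n z) ν := by
    intro n
    refine Measurable.aestronglyMeasurable ?_
    rw [hh]
    refine Measurable.mul ?_ ?_
    · exact Finset.measurable_prod _ fun i _ => measurable_const.sub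
        (hG₁m.comp ((measurable_const.sub (hfm i)).div_const _))
    · exact Finset.measurable_prod _ fun j _ => measurable_const.sub
        (hG₂m.comp ((measurable_const.sub (hgm j)).div_const _))
  have hbound : ∀ n, ∀ᵐ z ∂ν, ‖h n z‖ ≤ (1:ℝ) := by
    intro n
    refine Filter.Eventually.of_forall fun z => ?_
    rw [Real.norm_eq_abs, abs_le]
    have h1 : ∀ u : ℝ, (0:ℝ) ≤ 1 - G₁ u ∧ 1 - G₁ u ≤ 1 := fun u =>
      ⟨by linarith [(hG₁01 u).2], by linarith [(hG₁01 u).1]⟩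
    have h2 : ∀ u : ℝ, (0:ℝ) ≤ 1 - G₂ u ∧ 1 - G₂ u ≤ 1 := fun u =>
      ⟨by linarith [(hG₂01 u).2], by linarith [(hG₂01 u).1]⟩
    have hp1 : (0:ℝ) ≤ ∏ i ∈ Finset.range (p₁ n), (1 - G₁ ((a n * x - f i z) / σ i)) :=
      Finset.prod_nonneg fun i _ => (h1 _).1
    have hp1' : ∏ i ∈ Finset.range (p₁ n), (1 - G₁ ((a n * x - f i z) / σ i)) ≤ 1 :=
      Finset.prod_le_one (fun i _ => (h1 _).1) (fun i _ => (h1 _).2)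
    have hp2 : (0:ℝ) ≤ ∏ j ∈ Finset.range (p₂ n), (1 - G₂ ((a n * x - g j z) / σt j)) :=
      Finset.prod_nonneg fun j _ => (h2 _).1
    have hp2' : ∏ j ∈ Finset.range (p₂ n), (1 - G₂ ((a n * x - g j z) / σt j)) ≤ 1 :=
      Finset.prod_le_one (fun j _ => (h2 _).1) (fun j _ => (h2 _).2)
    rw [hh]
    constructor
    · nlinarith
    · nlinarith
  have hDCT := MeasureTheory.tendsto_integral_of_dominated_convergence
    (fun _ => (1:ℝ)) hmeasR (integrable_const 1) hbound hlim
  rw [MeasureTheory.integral_const, probReal_univ, one_smul] at hDCT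
  exact hDCT.congr fun n => (hEq n).symm
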